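/- Let a < b be real numbers, α₁ ∈ [a, (a+b)/2], and α₂ ∈ [(a+b)/2, b]. Let f : ℝ → ℝ be continuous on [a,b] and differentiable on (a,b), and let M ≥ 0 satisfy |f'(t)| ≤ M for all t ∈ (a,b). Then |∫_a^b f(t) dt − ((α₁ − a)·f(a) + (α₂ − α₁)·f((a+b)/2) + (b − α₂)·f(b))| ≤ M·((α₁ − a)² + ((a+b)/2 − α₁)² + (α₂ − (a+b)/2)² + (b − α₂)²)/2. -/

import Mathlib

open MeasureTheory intervalIntegral Set

lemma abs_triangle_piece (c d α M : ℝ) (hcd : c ≤ d) (hα : α ∈ Set.Icc c d)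
    (f f' : ℝ → ℝ) (hcont : ContinuousOn f (Set.Icc c d))
    (hderiv : ∀ t ∈ Set.Ioo c d, HasDerivAt f (f' t) t)
    (hint : IntervalIntegrable f' volume c d)
    (hM : 0 ≤ M) (hbound : ∀ᵐ t ∂volume.restrict (Set.Ioc c d), |f' t| ≤ M) :
    |(∫ t in c..d, f t) - ((α - c) * f c + (d - α) * f d)| ≤
      M * ((α - c) ^ 2 + (d - α) ^ 2) / 2 := by
  obtain ⟨hcα, hαd⟩ := hα
  have hfint : IntervalIntegrable f volume c d := by
    apply ContinuousOn.intervalIntegrable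
    rwa [Set.uIcc_of_le hcd]
  have hgint : IntervalIntegrable (fun t => (t - α) * f' t) volume c d :=
    hint.continuousOn_mul ((continuous_id.sub continuous_const).continuousOn)
  -- FTC for g t = (t - α) * f t
  have hftc : (∫ t in c..d, (f t + (t - α) * f' t)) = (d - α) * f d - (c - α) * f c := by
    have := intervalIntegral.integral_eq_sub_of_hasDerivAt_of_le (f := fun t => (t - α) * f t)
      (f' := fun t => f t + (t - α) * f' t) hcd
      (((continuous_id.sub continuous_const).continuousOn).mul hcont)
      (fun t ht => by
        have h1 : HasDerivAt (fun t : ℝ => t - α) 1 t := (hasDerivAt_id t).sub_const α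
        have h2 := h1.mul (hderiv t ht)
        rw [one_mul] at h2
        exact h2)
      (hfint.add hgint)
    simpa using this
  have hsplit : (∫ t in c..d, (t - α) * f' t)
      = ((d - α) * f d - (c - α) * f c) - ∫ t in c..d, f t := by
    rw [← hftc, intervalIntegral.integral_add hfint hgint]; ring
  have hkey : (∫ t in c..d, f t) - ((α - c) * f c + (d - α) * f d)
      = -(∫ t in c..d, (t - α) * f' t) := by
    rw [hsplit]; ring
  rw [hkey, abs_neg]
  -- value of the comparison integral
  have hval : (∫ t in c..d, |t - α| * M) = M * ((α - c) ^ 2 + (d - α) ^ 2) / 2 := by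
    have hi1 : IntervalIntegrable (fun t => |t - α| * M) volume c α :=
      (((continuous_id.sub continuous_const).abs.mul continuous_const).continuousOn).intervalIntegrable
    have hi2 : IntervalIntegrable (fun t => |t - α| * M) volume α d :=
      (((continuous_id.sub continuous_const).abs.mul continuous_const).continuousOn).intervalIntegrable
    rw [← intervalIntegral.integral_add_adjacent_intervals hi1 hi2]
    have e1 : (∫ t in c..α, |t - α| * M) = ∫ t in c..α, (α - t) * M := by
      apply intervalIntegral.integral_congr
      intro t ht
      rw [Set.uIcc_of_le hcα] at ht
      have h : |t - α| = α - t := by rw [abs_sub_comm]; exact abs_of_nonneg (by linarith [ht.2])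
      show |t - α| * M = (α - t) * M
      rw [h]
    have e2 : (∫ t in α..d, |t - α| * M) = ∫ t in α..d, (t - α) * M := by
      apply intervalIntegral.integral_congr
      intro t ht
      rw [Set.uIcc_of_le hαd] at ht
      have h : |t - α| = t - α := abs_of_nonneg (by linarith [ht.1])
      show |t - α| * M = (t - α) * M
      rw [h]
    rw [e1, e2]
    have i1 : IntervalIntegrable (fun _ : ℝ => α * M) volume c α := intervalIntegrable_const
    have i2 : IntervalIntegrable (fun t : ℝ => t * M) volume c α :=
      ((continuous_id.mul continuous_const).continuousOn).intervalIntegrable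
    have i3 : IntervalIntegrable (fun t : ℝ => t * M) volume α d :=
      ((continuous_id.mul continuous_const).continuousOn).intervalIntegrable
    have i4 : IntervalIntegrable (fun _ : ℝ => α * M) volume α d := intervalIntegrable_const
    have r1 : (∫ t in c..α, (α - t) * M) = (∫ t in c..α, α * M) - ∫ t in c..α, t * M := by
      rw [← intervalIntegral.integral_sub i1 i2]
      congr 1; ext t; ring
    have r2 : (∫ t in α..d, (t - α) * M) = (∫ t in α..d, t * M) - ∫ t in α..d, α * M := by
      rw [← intervalIntegral.integral_sub i3 i4]
      congr 1; ext t; ring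
    rw [r1, r2]
    simp only [intervalIntegral.integral_const, intervalIntegral.integral_mul_const,
      integral_id, smul_eq_mul]
    ring
  -- bound
  calc |∫ t in c..d, (t - α) * f' t| = ‖∫ t in c..d, (t - α) * f' t‖ :=
        (Real.norm_eq_abs _).symm
    _ ≤ |∫ t in c..d, |t - α| * M| := by
        apply intervalIntegral.norm_integral_le_abs_of_norm_le
        · rw [Set.uIoc_of_le hcd]
          filter_upwards [hbound] with t ht
          rw [Real.norm_eq_abs, abs_mul]
          exact mul_le_mul_of_nonneg_left ht (abs_nonneg _)
        · exact (((continuous_id.sub continuous_const).abs.mul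
            continuous_const).continuousOn).intervalIntegrable
    _ = M * ((α - c) ^ 2 + (d - α) ^ 2) / 2 := by
        rw [hval]; exact abs_of_nonneg (by positivity)

/-- Corollary 4.7: three-point inequality at the midpoint. -/
theorem corollary_4_7 (a b α₁ α₂ M : ℝ) (hab : a < b)
    (hα₁ : α₁ ∈ Set.Icc a ((a + b) / 2)) (hα₂ : α₂ ∈ Set.Icc ((a + b) / 2) b)
    (f f' : ℝ → ℝ)
    (hcont : ContinuousOn f (Set.Icc a b))
    (hderiv : ∀ t ∈ Set.Ioo a b, HasDerivAt f (f' t) t)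
    (hM : 0 ≤ M) (hbound : ∀ t ∈ Set.Ioo a b, |f' t| ≤ M) :
    |(∫ t in a..b, f t) -
        ((α₁ - a) * f a + (α₂ - α₁) * f ((a + b) / 2) + (b - α₂) * f b)| ≤
      M * ((α₁ - a) ^ 2 + ((a + b) / 2 - α₁) ^ 2 + (α₂ - (a + b) / 2) ^ 2 +
        (b - α₂) ^ 2) / 2 := by
  set m := (a + b) / 2 with hm
  have ham : a ≤ m := by rw [hm]; linarith
  have hmb : m ≤ b := by rw [hm]; linarith
  have hma : a < m := by rw [hm]; linarith
  have hmb' : m < b := by rw [hm]; linarith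
  have haem : ∀ c d : ℝ, c ≤ d → Set.Ioc c d ⊆ Set.Icc a b →
      IntervalIntegrable f' volume c d ∧
      (∀ᵐ t ∂volume.restrict (Set.Ioc c d), |f' t| ≤ M) := by
    intro c d hcd hsub
    have hnull : volume ({a, b} : Set ℝ) = 0 := by
      rw [Set.insert_eq]
      exact measure_union_null (measure_singleton a) (measure_singleton b)
    have hae : ∀ᵐ t ∂volume.restrict (Set.Ioc c d), t ∈ Set.Ioo a b := by
      rw [MeasureTheory.ae_restrict_iff' measurableSet_Ioc]
      refine MeasureTheory.ae_iff.2 (measure_mono_null ?_ hnull)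
      intro t ht
      simp only [Set.mem_setOf_eq, Classical.not_imp] at ht
      have h1 := hsub ht.1
      have h2 := ht.2
      simp only [Set.mem_Ioo, not_and_or, not_lt] at h2
      rcases h2 with h2 | h2
      · left; exact le_antisymm h2 h1.1
      · right; exact le_antisymm h1.2 h2
    have hbd : ∀ᵐ t ∂volume.restrict (Set.Ioc c d), |f' t| ≤ M := by
      filter_upwards [hae] with t ht using hbound t ht
    have hmeas : AEStronglyMeasurable f' (volume.restrict (Set.uIoc c d)) := by
      rw [Set.uIoc_of_le hcd]
      refine (measurable_deriv f).aestronglyMeasurable.congr ?_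
      filter_upwards [hae] with t ht
      exact (hderiv t ht).deriv
    have hint : IntervalIntegrable f' volume c d := by
      refine IntervalIntegrable.mono_fun' (g := fun _ => M) intervalIntegrable_const hmeas ?_
      rw [Set.uIoc_of_le hcd]
      filter_upwards [hbd] with t ht
      simpa using ht
    exact ⟨hint, hbd⟩
  obtain ⟨hint1, hbd1⟩ := haem a m ham
    (Set.Ioc_subset_Icc_self.trans (Set.Icc_subset_Icc_right hmb))
  obtain ⟨hint2, hbd2⟩ := haem m b hmb
    (Set.Ioc_subset_Icc_self.trans (Set.Icc_subset_Icc_left ham))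
  have h1 := abs_triangle_piece a m α₁ M ham hα₁ f f'
    (hcont.mono (Set.Icc_subset_Icc_right hmb))
    (fun t ht => hderiv t ⟨ht.1, lt_trans ht.2 hmb'⟩) hint1 hM hbd1
  have h2 := abs_triangle_piece m b α₂ M hmb hα₂ f f'
    (hcont.mono (Set.Icc_subset_Icc_left ham))
    (fun t ht => hderiv t ⟨lt_trans hma ht.1, ht.2⟩) hint2 hM hbd2
  have hfint1 : IntervalIntegrable f volume a m := by
    apply ContinuousOn.intervalIntegrable
    rw [Set.uIcc_of_le ham]
    exact hcont.mono (Set.Icc_subset_Icc_right hmb)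
  have hfint2 : IntervalIntegrable f volume m b := by
    apply ContinuousOn.intervalIntegrable
    rw [Set.uIcc_of_le hmb]
    exact hcont.mono (Set.Icc_subset_Icc_left ham)
  have hadd : (∫ t in a..b, f t) = (∫ t in a..m, f t) + ∫ t in m..b, f t :=
    (intervalIntegral.integral_add_adjacent_intervals hfint1 hfint2).symm
  calc |(∫ t in a..b, f t) -
        ((α₁ - a) * f a + (α₂ - α₁) * f m + (b - α₂) * f b)|
      = |((∫ t in a..m, f t) - ((α₁ - a) * f a + (m - α₁) * f m))
        + ((∫ t in m..b, f t) - ((α₂ - m) * f m + (b - α₂) * f b))| := by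
        rw [hadd]; ring_nf
    _ ≤ |(∫ t in a..m, f t) - ((α₁ - a) * f a + (m - α₁) * f m)|
        + |(∫ t in m..b, f t) - ((α₂ - m) * f m + (b - α₂) * f b)| := abs_add_le _ _
    _ ≤ M * ((α₁ - a) ^ 2 + (m - α₁) ^ 2) / 2 + M * ((α₂ - m) ^ 2 + (b - α₂) ^ 2) / 2 :=
        add_le_add h1 h2
    _ = M * ((α₁ - a) ^ 2 + (m - α₁) ^ 2 + (α₂ - m) ^ 2 + (b - α₂) ^ 2) / 2 := by ring
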